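/- Optimality of the √ε rate for the oscillating boundary layer: if η_{k₀} ≠ 0 for some k₀ ≠ 0, then there exist constants c > 0 and ε₀ ∈ (0,1] such that for every ε ∈ (0,ε₀] with L/(2πε) a positive integer, (∫_{(0,L)×(0,1)} |β(x₁/ε, x₂/ε) − η₀|² dx)^{1/2} ≥ c √ε. (Hence the oscillations of the first-order boundary layer are of order √ε in L²(Ω⁰), larger than any O(ε²) macroscopic second-order correction, so averaged second-order wall-laws cannot improve on first-order ones.) -/

import Mathlib

open MeasureTheory Real Set

noncomputable section

/-- The smooth domain Ω⁰. -/
def Omega0 (L : ℝ) : Set (ℝ × ℝ) := Ioo 0 L ×ˢ Ioo (0 : ℝ) 1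

/-- The Fourier mode `e^{i k y₁ - |k| y₂}`. -/
def fourierMode (k : ℤ) (y₁ y₂ : ℝ) : ℂ :=
  Complex.exp (Complex.I * (k : ℂ) * (y₁ : ℂ) - ((|k| : ℤ) : ℂ) * (y₂ : ℂ))

/-- The boundary-layer corrector in the upper half plane, given by its Fourier series. -/
def blSeries (η : ℤ → ℂ) (y₁ y₂ : ℝ) : ℝ :=
  (∑' k : ℤ, η k * fourierMode k y₁ y₂).re

open scoped ENNReal NNReal

def PhiC (η : ℤ → ℂ) (y₁ y₂ : ℝ) : ℂ := ∑' k : ℤ, η k * fourierMode k y₁ y₂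

lemma norm_fourierMode (k : ℤ) (y₁ y₂ : ℝ) :
    ‖fourierMode k y₁ y₂‖ = Real.exp (-|(k : ℝ)| * y₂) := by
  rw [fourierMode, Complex.norm_exp]
  congr 1
  simp [Complex.sub_re, Complex.mul_re, Complex.mul_im, Complex.I_re, Complex.I_im]

lemma summable_exp_abs {t : ℝ} (ht : 0 < t) :
    Summable (fun k : ℤ => Real.exp (-|(k : ℝ)| * t)) := by
  have hgeo : Summable (fun n : ℕ => Real.exp (-t) ^ n) :=
    summable_geometric_of_lt_one (Real.exp_pos _).le
      (Real.exp_lt_one_iff.mpr (by linarith))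
  have h : ∀ n : ℕ, Real.exp (-t) ^ n = Real.exp (-|((n : ℤ) : ℝ)| * t) := by
    intro n
    rw [← Real.exp_nat_mul]
    congr 1
    simp [abs_of_nonneg, mul_comm]
  apply Summable.of_nat_of_neg
  · exact hgeo.congr h
  · exact hgeo.congr (fun n => by rw [h]; norm_num)

lemma tsum_cauchy_schwarz {a b : ℤ → ℝ} (ha : ∀ k, 0 ≤ a k) (hb : ∀ k, 0 ≤ b k)
    (hab : Summable (fun k => a k * b k)) (ha2 : Summable (fun k => a k ^ 2))
    (hb2 : Summable (fun k => b k ^ 2)) :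
    (∑' k, a k * b k) ^ 2 ≤ (∑' k, a k ^ 2) * (∑' k, b k ^ 2) := by
  have hA : 0 ≤ ∑' k, a k ^ 2 := tsum_nonneg fun k => sq_nonneg _
  have hB : 0 ≤ ∑' k, b k ^ 2 := tsum_nonneg fun k => sq_nonneg _
  have habnn : 0 ≤ ∑' k, a k * b k := tsum_nonneg fun k => mul_nonneg (ha k) (hb k)
  have key : (∑' k, a k * b k) ≤ Real.sqrt ((∑' k, a k ^ 2) * (∑' k, b k ^ 2)) := by
    apply Summable.tsum_le_of_sum_le hab
    intro s
    have h1 := Finset.sum_mul_sq_le_sq_mul_sq s a b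
    have h2 : (∑ i ∈ s, a i ^ 2) ≤ ∑' k, a k ^ 2 :=
      Summable.sum_le_tsum s (fun k _ => sq_nonneg _) ha2
    have h3 : (∑ i ∈ s, b i ^ 2) ≤ ∑' k, b k ^ 2 :=
      Summable.sum_le_tsum s (fun k _ => sq_nonneg _) hb2
    have h4 : 0 ≤ ∑ i ∈ s, a i * b i :=
      Finset.sum_nonneg fun i _ => mul_nonneg (ha i) (hb i)
    have h5 : (∑ i ∈ s, a i * b i) ^ 2 ≤ (∑' k, a k ^ 2) * (∑' k, b k ^ 2) := by
      calc (∑ i ∈ s, a i * b i) ^ 2 ≤ (∑ i ∈ s, a i ^ 2) * (∑ i ∈ s, b i ^ 2) := h1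
        _ ≤ (∑' k, a k ^ 2) * (∑' k, b k ^ 2) := by
            apply mul_le_mul h2 h3 (Finset.sum_nonneg fun i _ => sq_nonneg _) hA
    calc (∑ i ∈ s, a i * b i) = Real.sqrt ((∑ i ∈ s, a i * b i) ^ 2) := by
          rw [Real.sqrt_sq h4]
      _ ≤ Real.sqrt ((∑' k, a k ^ 2) * (∑' k, b k ^ 2)) := Real.sqrt_le_sqrt h5
  calc (∑' k, a k * b k) ^ 2 ≤ Real.sqrt ((∑' k, a k ^ 2) * (∑' k, b k ^ 2)) ^ 2 := by
        apply pow_le_pow_left₀ habnn key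
    _ = (∑' k, a k ^ 2) * (∑' k, b k ^ 2) := Real.sq_sqrt (mul_nonneg hA hB)

lemma phiC_im_eq_zero (η : ℤ → ℂ) (hconj : ∀ k : ℤ, η (-k) = starRingEnd ℂ (η k))
    (y₁ y₂ : ℝ) : (PhiC η y₁ y₂).im = 0 := by
  rw [← Complex.conj_eq_iff_im]
  have h2 : ∀ k : ℤ, star (η k * fourierMode k y₁ y₂) = η (-k) * fourierMode (-k) y₁ y₂ := by
    intro k
    rw [star_mul']
    congr 1
    · rw [hconj k]; rfl
    · show starRingEnd ℂ (fourierMode k y₁ y₂) = _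
      rw [fourierMode, fourierMode, ← Complex.exp_conj]
      congr 1
      simp [map_sub, map_mul, Complex.conj_I, abs_neg]
  calc starRingEnd ℂ (PhiC η y₁ y₂)
      = ∑' k : ℤ, star (η k * fourierMode k y₁ y₂) := tsum_star
    _ = ∑' k : ℤ, η (-k) * fourierMode (-k) y₁ y₂ := by exact tsum_congr h2
    _ = PhiC η y₁ y₂ := by
        rw [PhiC]
        exact (Equiv.neg ℤ).tsum_eq (fun k => η k * fourierMode k y₁ y₂)

lemma continuous_fourierMode (k : ℤ) : Continuous (fun p : ℝ × ℝ => fourierMode k p.1 p.2) := by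
  apply Complex.continuous_exp.comp
  exact ((continuous_const.mul (Complex.continuous_ofReal.comp continuous_fst)).sub
    (continuous_const.mul (Complex.continuous_ofReal.comp continuous_snd)))

lemma continuousOn_phiC (η : ℤ → ℂ) {B : ℝ} (hB : ∀ k, ‖η k‖ ≤ B) :
    ContinuousOn (fun p : ℝ × ℝ => PhiC η p.1 p.2) {p : ℝ × ℝ | 0 < p.2} := by
  simp only [PhiC]
  have hB0 : 0 ≤ B := le_trans (norm_nonneg _) (hB 0)
  intro p hp
  apply ContinuousAt.continuousWithinAt
  have hp2 : (0:ℝ) < p.2 := hp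
  have hδ : 0 < p.2 / 2 := half_pos hp2
  have hopen : IsOpen {q : ℝ × ℝ | p.2 / 2 < q.2} := isOpen_lt continuous_const continuous_snd
  have hcont : ContinuousOn (fun q : ℝ × ℝ => ∑' k : ℤ, η k * fourierMode k q.1 q.2)
      {q : ℝ × ℝ | p.2 / 2 < q.2} := by
    apply continuousOn_tsum (u := fun k : ℤ => B * Real.exp (-|(k:ℝ)| * (p.2/2)))
    · intro k
      exact (continuous_const.mul (continuous_fourierMode k)).continuousOn
    · exact (summable_exp_abs hδ).mul_left B
    · intro k q hq
      rw [norm_mul, norm_fourierMode]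
      apply mul_le_mul (hB k) _ (Real.exp_pos _).le hB0
      apply Real.exp_le_exp.mpr
      have : p.2/2 ≤ q.2 := le_of_lt hq
      nlinarith [abs_nonneg ((k:ℝ))]
  exact hcont.continuousAt (hopen.mem_nhds (by simpa using half_lt_self hp2))

lemma exp_neg_le_rpow {u : ℝ} (hu : 0 < u) : Real.exp (-u) ≤ u ^ (-(1/2) : ℝ) := by
  have h1 : Real.sqrt u ≤ Real.exp u := by
    rcases le_total u 1 with h | h
    · have h1 : Real.sqrt u ≤ 1 := Real.sqrt_le_one.mpr h
      have h2 : (1:ℝ) ≤ Real.exp u := Real.one_le_exp hu.le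
      linarith
    · have h1 : Real.sqrt u ≤ Real.sqrt (u ^ 2) := Real.sqrt_le_sqrt (by nlinarith)
      rw [Real.sqrt_sq (by linarith)] at h1
      have h2 := Real.add_one_le_exp u
      linarith
  rw [Real.rpow_neg hu.le, Real.exp_neg, ← Real.sqrt_eq_rpow]
  exact inv_anti₀ (Real.sqrt_pos.mpr hu) h1

lemma summable_w : Summable (fun k : ℤ => ((1:ℝ) + |(k:ℝ)|) ^ (-(3/2) : ℝ)) := by
  have hfin : Summable (fun k : ℤ => if k = 0 then (1:ℝ) else 0) := by
    apply summable_of_finite_support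
    apply Set.Finite.subset (Set.finite_singleton (0:ℤ))
    intro k hk
    simp only [Function.mem_support] at hk
    rcases eq_or_ne k 0 with h | h
    · simp [h]
    · simp [h] at hk
  have hrp : Summable (fun k : ℤ => |(k:ℝ)| ^ (-(3/2) : ℝ)) := by
    have h := summable_abs_int_rpow (b := 3/2) (by norm_num)
    simpa using h
  refine Summable.of_nonneg_of_le (fun k => by positivity) (fun k => ?_) (hfin.add hrp)
  rcases eq_or_ne k 0 with hk | hk
  · subst hk
    simp [Real.zero_rpow (by norm_num : (-(3/2):ℝ) ≠ 0), Real.one_rpow]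
  · have h1 : (1:ℝ) ≤ |(k:ℝ)| := by
      have h := Int.one_le_abs (by exact_mod_cast hk : k ≠ 0)
      calc (1:ℝ) ≤ ((|k| : ℤ) : ℝ) := by exact_mod_cast h
        _ = |(k:ℝ)| := by push_cast; ring
    have h2 : ((1:ℝ) + |(k:ℝ)|) ^ (-(3/2) : ℝ) ≤ |(k:ℝ)| ^ (-(3/2) : ℝ) :=
      Real.rpow_le_rpow_of_nonpos (by linarith) (by linarith) (by norm_num)
    simp only [hk, if_false, zero_add]
    exact h2

lemma abs_le_sq_div (u δ : ℝ) (hδ : 0 < δ) : |u| ≤ u ^ 2 / (2 * δ) + δ / 2 := by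
  rw [div_add' _ _ _ (by positivity), le_div_iff₀ (by positivity)]
  nlinarith [sq_nonneg (|u| - δ), sq_abs u, abs_nonneg u]


set_option maxHeartbeats 1000000 in
lemma slice_lower_bound
    (L : ℝ) (hL : 0 < L) (η : ℤ → ℂ) {B : ℝ}
    (hB : ∀ k, ‖η k‖ ≤ B)
    (hreal : ∀ y₁ y₂ : ℝ, 0 < y₂ → (PhiC η y₁ y₂).im = 0)
    (hη0 : (η 0).im = 0)
    (hPhi : ContinuousOn (fun p : ℝ × ℝ => PhiC η p.1 p.2) {p : ℝ × ℝ | 0 < p.2})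
    (k₀ : ℤ) (hk₀ : k₀ ≠ 0) (hη : η k₀ ≠ 0)
    {ε : ℝ} (hε : 0 < ε) {N : ℕ} (hN : 0 < N) (hLN : L = 2 * π * ε * N)
    {y : ℝ} (hy : 0 < y) :
    L * (‖η k₀‖ ^ 2 * Real.exp (-(2 * |(k₀ : ℝ)|) * (y / ε))) ≤
      ∫ x in Ioo 0 L, ((PhiC η (x / ε) (y / ε)).re - (η 0).re) ^ 2 := by
  have hεne : (ε : ℂ) ≠ 0 := Complex.ofReal_ne_zero.mpr hε.ne'
  set t : ℝ := y / ε with ht_def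
  have ht : 0 < t := div_pos hy hε
  have hslice : Continuous fun x : ℝ => PhiC η (x / ε) t := by
    have h1 : Continuous fun x : ℝ => ((x / ε, t) : ℝ × ℝ) :=
      (continuous_id.div_const ε).prodMk continuous_const
    have h2 := hPhi.comp_continuous h1 (fun x => ht)
    exact h2
  set f1 : ℝ → ℝ := fun x => (PhiC η (x / ε) t).re - (η 0).re with hf1_def
  have hf1c : Continuous f1 := (Complex.continuous_re.comp hslice).sub continuous_const
  set m₀ : ℂ := Complex.I * ((-k₀ : ℤ) : ℂ) / ε with hm0_def
  have h2exp : Continuous fun x : ℝ => Complex.exp (m₀ * x) :=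
    Complex.continuous_exp.comp (continuous_const.mul Complex.continuous_ofReal)
  have hnorme : ∀ (m : ℤ) (x : ℝ), ‖Complex.exp (Complex.I * (m : ℂ) / ε * x)‖ = 1 := by
    intro m x
    rw [Complex.norm_exp]
    have h : Complex.I * (m : ℂ) / ε * x = Complex.I * (((m : ℝ) / ε * x : ℝ) : ℂ) := by
      push_cast; ring
    rw [h]
    simp
  have hI1 : ∀ m : ℤ, m ≠ 0 →
      ∫ x in Ioo (0:ℝ) L, Complex.exp (Complex.I * (m : ℂ) / ε * x) = 0 := by
    intro m hm
    have hc : Complex.I * (m : ℂ) / ε ≠ 0 :=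
      div_ne_zero (mul_ne_zero Complex.I_ne_zero (Int.cast_ne_zero.mpr hm)) hεne
    rw [← integral_Ioc_eq_integral_Ioo, ← intervalIntegral.integral_of_le hL.le,
      integral_exp_mul_complex hc]
    have h2 : Complex.I * (m : ℂ) / ε * (L : ℂ) = ((m * N : ℤ) : ℂ) * (2 * π * Complex.I) := by
      rw [hLN]; push_cast; field_simp
    rw [h2, Complex.exp_int_mul_two_pi_mul_I]
    simp
  have hc : Summable (fun k : ℤ => ‖η k‖ * Real.exp (-|(k:ℝ)| * t)) := by
    refine Summable.of_nonneg_of_le (fun k => by positivity) (fun k => ?_)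
      ((summable_exp_abs ht).mul_left B)
    exact mul_le_mul_of_nonneg_right (hB k) (Real.exp_pos _).le
  have hterm : ∀ (k : ℤ) (x : ℝ),
      η k * fourierMode k (x / ε) t * Complex.exp (m₀ * x)
        = η k * ((Real.exp (-|(k:ℝ)| * t) : ℝ) : ℂ)
            * Complex.exp (Complex.I * ((k - k₀ : ℤ) : ℂ) / ε * x) := by
    intro k x
    rw [hm0_def]
    simp only [fourierMode, Complex.ofReal_exp, mul_assoc, ← Complex.exp_add]
    congr 2
    rw [show ((|k| : ℤ) : ℂ) = ((|(k:ℝ)| : ℝ) : ℂ) by norm_cast]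
    push_cast
    field_simp
    ring
  have hgint : ∀ k : ℤ,
      (∫ x in Ioo (0:ℝ) L, η k * fourierMode k (x / ε) t * Complex.exp (m₀ * x))
        = if k = k₀ then η k₀ * ((Real.exp (-|(k₀:ℝ)| * t) : ℝ) : ℂ) * (L : ℂ) else 0 := by
    intro k
    rcases eq_or_ne k k₀ with hk | hk
    · subst hk
      rw [if_pos rfl]
      have hconst : ∀ x ∈ Ioo (0:ℝ) L, η k * fourierMode k (x / ε) t * Complex.exp (m₀ * x)
          = η k * ((Real.exp (-|(k:ℝ)| * t) : ℝ) : ℂ) := by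
        intro x _
        rw [hterm k x]
        simp
      rw [setIntegral_congr_fun measurableSet_Ioo hconst, setIntegral_const,
        Real.volume_real_Ioo_of_le hL.le, sub_zero, Complex.real_smul]
      ring
    · rw [if_neg hk]
      calc (∫ x in Ioo (0:ℝ) L, η k * fourierMode k (x / ε) t * Complex.exp (m₀ * x))
          = ∫ x in Ioo (0:ℝ) L, η k * ((Real.exp (-|(k:ℝ)| * t) : ℝ) : ℂ)
              * Complex.exp (Complex.I * ((k - k₀ : ℤ) : ℂ) / ε * x) :=
            setIntegral_congr_fun measurableSet_Ioo (fun x _ => hterm k x)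
        _ = η k * ((Real.exp (-|(k:ℝ)| * t) : ℝ) : ℂ)
              * ∫ x in Ioo (0:ℝ) L, Complex.exp (Complex.I * ((k - k₀ : ℤ) : ℂ) / ε * x) := by
            rw [MeasureTheory.integral_const_mul]
        _ = 0 := by rw [hI1 (k - k₀) (sub_ne_zero.mpr hk), mul_zero]
  have hPhimul : ∀ x : ℝ, PhiC η (x / ε) t * Complex.exp (m₀ * x)
      = ∑' k : ℤ, η k * fourierMode k (x / ε) t * Complex.exp (m₀ * x) := by
    intro x
    rw [PhiC]
    exact (tsum_mul_right (f := fun k : ℤ => η k * fourierMode k (x / ε) t)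
      (a := Complex.exp (m₀ * x))).symm
  have hmeas : ∀ k : ℤ, AEStronglyMeasurable
      (fun x : ℝ => η k * fourierMode k (x / ε) t * Complex.exp (m₀ * x))
      (volume.restrict (Ioo 0 L)) := by
    intro k
    apply Continuous.aestronglyMeasurable
    have h1 : Continuous fun x : ℝ => fourierMode k (x / ε) t := by
      have hmk : Continuous fun x : ℝ => ((x / ε, t) : ℝ × ℝ) :=
        (continuous_id.div_const ε).prodMk continuous_const
      have h2 := (continuous_fourierMode k).comp hmk
      exact h2
    exact (continuous_const.mul h1).mul h2exp
  have hnorm_term : ∀ (k : ℤ) (x : ℝ),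
      ‖η k * fourierMode k (x / ε) t * Complex.exp (m₀ * x)‖
        = ‖η k‖ * Real.exp (-|(k:ℝ)| * t) := by
    intro k x
    rw [norm_mul, norm_mul, norm_fourierMode]
    have h : ‖Complex.exp (m₀ * x)‖ = 1 := by
      rw [hm0_def]; exact hnorme (-k₀) x
    rw [h, mul_one]
  have hlint : (∑' k : ℤ, ∫⁻ x in Ioo (0:ℝ) L,
      ‖η k * fourierMode k (x / ε) t * Complex.exp (m₀ * x)‖₊) ≠ ⊤ := by
    have heq : ∀ k : ℤ, (∫⁻ x in Ioo (0:ℝ) L,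
        ‖η k * fourierMode k (x / ε) t * Complex.exp (m₀ * x)‖₊)
          = ENNReal.ofReal (‖η k‖ * Real.exp (-|(k:ℝ)| * t)) * ENNReal.ofReal L := by
      intro k
      have hp : ∀ x : ℝ, (‖η k * fourierMode k (x / ε) t * Complex.exp (m₀ * x)‖₊ : ℝ≥0∞)
          = ENNReal.ofReal (‖η k‖ * Real.exp (-|(k:ℝ)| * t)) := by
        intro x
        rw [← enorm_eq_nnnorm, ← ofReal_norm, hnorm_term k x]
      rw [lintegral_congr hp, setLIntegral_const, Real.volume_Ioo, sub_zero]
    rw [tsum_congr heq, ENNReal.tsum_mul_right]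
    apply ENNReal.mul_ne_top _ ENNReal.ofReal_ne_top
    rw [← ENNReal.ofReal_tsum_of_nonneg (fun k => by positivity) hc]
    exact ENNReal.ofReal_ne_top
  have hswap : (∫ x in Ioo (0:ℝ) L, PhiC η (x / ε) t * Complex.exp (m₀ * x))
      = η k₀ * ((Real.exp (-|(k₀:ℝ)| * t) : ℝ) : ℂ) * (L : ℂ) := by
    rw [setIntegral_congr_fun measurableSet_Ioo (fun x _ => hPhimul x),
      MeasureTheory.integral_tsum hmeas hlint,
      tsum_eq_single k₀ (fun k hk => by rw [hgint k, if_neg hk]),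
      hgint k₀, if_pos rfl]
  have hsub : ∀ x : ℝ, ((f1 x : ℝ) : ℂ) = PhiC η (x / ε) t - η 0 := by
    intro x
    apply Complex.ext
    · simp [hf1_def]
    · simp [hf1_def, hreal (x / ε) t ht, hη0]
  have hη0int : (∫ x in Ioo (0:ℝ) L, η 0 * Complex.exp (m₀ * x)) = 0 := by
    rw [MeasureTheory.integral_const_mul, hm0_def, hI1 (-k₀) (neg_ne_zero.mpr hk₀), mul_zero]
  have hPhiint : IntegrableOn (fun x : ℝ => PhiC η (x / ε) t * Complex.exp (m₀ * x)) (Ioo 0 L) :=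
    ((hslice.mul h2exp).integrableOn_Icc).mono_set Ioo_subset_Icc_self
  have hconstint : IntegrableOn (fun x : ℝ => η 0 * Complex.exp (m₀ * x)) (Ioo 0 L) :=
    ((continuous_const.mul h2exp).integrableOn_Icc).mono_set Ioo_subset_Icc_self
  have hkey : (∫ x in Ioo (0:ℝ) L, ((f1 x : ℝ) : ℂ) * Complex.exp (m₀ * x))
      = η k₀ * ((Real.exp (-|(k₀:ℝ)| * t) : ℝ) : ℂ) * (L : ℂ) := by
    have hp : ∀ x ∈ Ioo (0:ℝ) L, ((f1 x : ℝ) : ℂ) * Complex.exp (m₀ * x)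
        = PhiC η (x / ε) t * Complex.exp (m₀ * x) - η 0 * Complex.exp (m₀ * x) := by
      intro x _; rw [hsub x]; ring
    rw [setIntegral_congr_fun measurableSet_Ioo hp, integral_sub hPhiint hconstint,
      hswap, hη0int, sub_zero]
  have habs : L * (‖η k₀‖ * Real.exp (-|(k₀:ℝ)| * t)) ≤ ∫ x in Ioo (0:ℝ) L, |f1 x| := by
    have h1 : ‖∫ x in Ioo (0:ℝ) L, ((f1 x : ℝ) : ℂ) * Complex.exp (m₀ * x)‖
        = ‖η k₀‖ * Real.exp (-|(k₀:ℝ)| * t) * L := by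
      rw [hkey, norm_mul, norm_mul, Complex.norm_real, Complex.norm_real,
        Real.norm_eq_abs, Real.norm_eq_abs, abs_of_pos (Real.exp_pos _), abs_of_pos hL]
    have h2 := norm_integral_le_integral_norm
      (μ := volume.restrict (Ioo (0:ℝ) L)) (fun x => ((f1 x : ℝ) : ℂ) * Complex.exp (m₀ * x))
    rw [h1] at h2
    have h3 : ∀ x ∈ Ioo (0:ℝ) L, ‖((f1 x : ℝ) : ℂ) * Complex.exp (m₀ * x)‖ = |f1 x| := by
      intro x _
      have he : ‖Complex.exp (m₀ * x)‖ = 1 := by rw [hm0_def]; exact hnorme (-k₀) x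
      rw [norm_mul, he, mul_one, Complex.norm_real, Real.norm_eq_abs]
    calc L * (‖η k₀‖ * Real.exp (-|(k₀:ℝ)| * t))
        = ‖η k₀‖ * Real.exp (-|(k₀:ℝ)| * t) * L := by ring
      _ ≤ ∫ x in Ioo (0:ℝ) L, ‖((f1 x : ℝ) : ℂ) * Complex.exp (m₀ * x)‖ := h2
      _ = ∫ x in Ioo (0:ℝ) L, |f1 x| := setIntegral_congr_fun measurableSet_Ioo h3
  set δ : ℝ := ‖η k₀‖ * Real.exp (-|(k₀:ℝ)| * t) with hδ_def
  have hδ : 0 < δ := mul_pos (norm_pos_iff.mpr hη) (Real.exp_pos _)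
  have hintf2 : IntegrableOn (fun x => f1 x ^ 2) (Ioo 0 L) :=
    ((hf1c.pow 2).integrableOn_Icc).mono_set Ioo_subset_Icc_self
  have hintabs : IntegrableOn (fun x => |f1 x|) (Ioo 0 L) :=
    (hf1c.abs.integrableOn_Icc).mono_set Ioo_subset_Icc_self
  have hconst2 : IntegrableOn (fun _ : ℝ => δ / 2) (Ioo 0 L) :=
    integrableOn_const measure_Ioo_lt_top.ne
  have hAM : (∫ x in Ioo (0:ℝ) L, |f1 x|)
      ≤ (∫ x in Ioo (0:ℝ) L, f1 x ^ 2) / (2 * δ) + δ / 2 * L := by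
    have hpt : ∀ x : ℝ, |f1 x| ≤ f1 x ^ 2 / (2 * δ) + δ / 2 := fun x => abs_le_sq_div _ _ hδ
    have hrhsint : IntegrableOn (fun x : ℝ => f1 x ^ 2 / (2 * δ) + δ / 2) (Ioo 0 L) :=
      ((((hf1c.pow 2).div_const (2 * δ)).add continuous_const).integrableOn_Icc).mono_set
        Ioo_subset_Icc_self
    calc (∫ x in Ioo (0:ℝ) L, |f1 x|)
        ≤ ∫ x in Ioo (0:ℝ) L, (f1 x ^ 2 / (2 * δ) + δ / 2) :=
          integral_mono hintabs hrhsint hpt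
      _ = (∫ x in Ioo (0:ℝ) L, f1 x ^ 2) / (2 * δ) + δ / 2 * L := by
          rw [integral_add (hintf2.div_const (2 * δ)) hconst2, integral_div, setIntegral_const,
            Real.volume_real_Ioo_of_le hL.le, sub_zero, smul_eq_mul]
          ring
  have hfinal : L * δ ≤ (∫ x in Ioo (0:ℝ) L, f1 x ^ 2) / (2 * δ) + δ / 2 * L :=
    le_trans habs hAM
  have h5 : L * δ * (2 * δ) ≤ ((∫ x in Ioo (0:ℝ) L, f1 x ^ 2) / (2 * δ) + δ / 2 * L) * (2 * δ) :=
    mul_le_mul_of_nonneg_right hfinal (by positivity)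
  have h6 : ((∫ x in Ioo (0:ℝ) L, f1 x ^ 2) / (2 * δ)) * (2 * δ)
      = ∫ x in Ioo (0:ℝ) L, f1 x ^ 2 := div_mul_cancel₀ _ (by positivity)
  have hsq : Real.exp (-(2 * |(k₀:ℝ)|) * t) = Real.exp (-|(k₀:ℝ)| * t) ^ 2 := by
    rw [sq, ← Real.exp_add]; ring_nf
  have hgoal : (∫ x in Ioo (0:ℝ) L, ((PhiC η (x / ε) t).re - (η 0).re) ^ 2)
      = ∫ x in Ioo (0:ℝ) L, f1 x ^ 2 := rfl
  have h7 : L * (‖η k₀‖ ^ 2 * Real.exp (-(2 * |(k₀:ℝ)|) * t)) = L * δ ^ 2 := by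
    rw [hsq, hδ_def]; ring
  rw [hgoal, h7]
  nlinarith [h5, h6, hδ]

set_option maxHeartbeats 1000000 in
/-- Optimality of the `√ε` rate for the oscillating boundary layer: if some nonzero
Fourier mode `η_{k₀} ≠ 0` (`k₀ ≠ 0`) is present, then `‖β(·/ε) − η₀‖_{L²(Ω⁰)} ≥ c √ε`
for all small admissible `ε`. -/
theorem boundary_layer_oscillation_lower_bound
    (L : ℝ) (hL : 0 < L) (η : ℤ → ℂ)
    (hconj : ∀ k : ℤ, η (-k) = starRingEnd ℂ (η k))
    (hsum : Summable (fun k : ℤ => (1 + |(k : ℝ)|) * ‖η k‖ ^ 2))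
    (k₀ : ℤ) (hk₀ : k₀ ≠ 0) (hη : η k₀ ≠ 0) :
    ∃ c > (0 : ℝ), ∃ ε₀ : ℝ, 0 < ε₀ ∧ ε₀ ≤ 1 ∧
      ∀ ε : ℝ, 0 < ε → ε ≤ ε₀ → (∃ N : ℕ, 0 < N ∧ L = 2 * π * ε * N) →
        c * Real.sqrt ε ≤
          Real.sqrt (∫ p in Omega0 L,
            (blSeries η (p.1 / ε) (p.2 / ε) - (η 0).re) ^ 2) := by
  classical
  have hsum2 : Summable (fun k : ℤ => ‖η k‖ ^ 2) := by
    refine Summable.of_nonneg_of_le (fun k => sq_nonneg _) (fun k => ?_) hsum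
    have h1 : (1:ℝ) ≤ 1 + |(k:ℝ)| := le_add_of_nonneg_right (abs_nonneg _)
    nlinarith [sq_nonneg ‖η k‖]
  set B : ℝ := max 1 (∑' k : ℤ, ‖η k‖ ^ 2) with hB_def
  have hB : ∀ k, ‖η k‖ ≤ B := by
    intro k
    rcases le_total ‖η k‖ 1 with h | h
    · exact le_trans h (le_max_left _ _)
    · have h2 : ‖η k‖ ≤ ‖η k‖ ^ 2 := by nlinarith
      exact le_trans h2 (le_trans (Summable.le_tsum hsum2 k (fun j _ => sq_nonneg _)) (le_max_right _ _))
  have hPhi : ContinuousOn (fun p : ℝ × ℝ => PhiC η p.1 p.2) {p : ℝ × ℝ | 0 < p.2} :=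
    continuousOn_phiC η hB
  have hreal : ∀ y₁ y₂ : ℝ, 0 < y₂ → (PhiC η y₁ y₂).im = 0 := fun y₁ y₂ _ =>
    phiC_im_eq_zero η hconj y₁ y₂
  have hη0 : (η 0).im = 0 := by
    have h := hconj 0
    rw [neg_zero] at h
    exact Complex.conj_eq_iff_im.mp h.symm
  set A : ℝ := ∑' k : ℤ, (1 + |(k:ℝ)|) * ‖η k‖ ^ 2 with hA_def
  have hA0 : 0 ≤ A := tsum_nonneg (fun k => by positivity)
  set W : ℝ := ∑' k : ℤ, ((1:ℝ) + |(k:ℝ)|) ^ (-(3/2) : ℝ) with hW_def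
  have hW0 : 0 ≤ W := tsum_nonneg (fun k => by positivity)
  have hηpos : 0 < ‖η k₀‖ := norm_pos_iff.mpr hη
  refine ⟨Real.sqrt (L * (‖η k₀‖ ^ 2 * Real.exp (-(2 * |(k₀:ℝ)|)))), ?_, 1, one_pos, le_refl 1, ?_⟩
  · apply Real.sqrt_pos.mpr
    positivity
  intro ε hε hε1 hNex
  obtain ⟨N, hN, hLN⟩ := hNex
  -- pointwise bound on the series, for integrability
  have hSbound : ∀ t : ℝ, 0 < t → ∀ y₁ : ℝ,
      ((PhiC η y₁ t).re - (η 0).re) ^ 2 ≤ 4 * (A * ((1 + t ^ (-(1/2) : ℝ)) * W)) := by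
    intro t ht y₁
    have hc : Summable (fun k : ℤ => ‖η k‖ * Real.exp (-|(k:ℝ)| * t)) := by
      refine Summable.of_nonneg_of_le (fun k => by positivity) (fun k => ?_)
        ((summable_exp_abs ht).mul_left B)
      exact mul_le_mul_of_nonneg_right (hB k) (Real.exp_pos _).le
    set S : ℝ := ∑' k : ℤ, ‖η k‖ * Real.exp (-|(k:ℝ)| * t) with hS_def
    have hS0 : 0 ≤ S := tsum_nonneg fun k => by positivity
    have hsn : Summable (fun k : ℤ => ‖η k * fourierMode k y₁ t‖) :=
      hc.congr (fun k => by rw [norm_mul, norm_fourierMode])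
    have hnormPhi : ‖PhiC η y₁ t‖ ≤ S := by
      rw [PhiC]
      refine le_trans (norm_tsum_le_tsum_norm hsn) (le_of_eq ?_)
      exact tsum_congr (fun k => by rw [norm_mul, norm_fourierMode])
    have hη0le : ‖η 0‖ ≤ S := by
      have h := Summable.le_tsum hc 0 (fun j _ => by positivity)
      have h0 : ‖η (0:ℤ)‖ * Real.exp (-|((0:ℤ):ℝ)| * t) = ‖η 0‖ := by norm_num
      rw [h0] at h
      exact h
    have habsf : |(PhiC η y₁ t).re - (η 0).re| ≤ 2 * S := by
      have h1 : |(PhiC η y₁ t).re - (η 0).re| ≤ |(PhiC η y₁ t).re| + |(η 0).re| := by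
        have h := abs_add_le ((PhiC η y₁ t).re) (-(η 0).re)
        simpa [sub_eq_add_neg] using h
      have h2 : |(PhiC η y₁ t).re| ≤ ‖PhiC η y₁ t‖ := by
        exact Complex.abs_re_le_norm _
      have h3 : |(η 0).re| ≤ ‖η 0‖ := by
        exact Complex.abs_re_le_norm _
      calc |(PhiC η y₁ t).re - (η 0).re| ≤ |(PhiC η y₁ t).re| + |(η 0).re| := h1
        _ ≤ ‖PhiC η y₁ t‖ + ‖η 0‖ := add_le_add h2 h3
        _ ≤ S + S := add_le_add hnormPhi hη0le
        _ = 2 * S := by ring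
    set a : ℤ → ℝ := fun k => Real.sqrt (1 + |(k:ℝ)|) * ‖η k‖ with ha_def
    set b : ℤ → ℝ := fun k => Real.exp (-|(k:ℝ)| * t) / Real.sqrt (1 + |(k:ℝ)|) with hb_def
    have hab : ∀ k, a k * b k = ‖η k‖ * Real.exp (-|(k:ℝ)| * t) := by
      intro k
      have hs : Real.sqrt (1 + |(k:ℝ)|) ≠ 0 := by positivity
      simp only [ha_def, hb_def]
      field_simp
    have ha2 : ∀ k, a k ^ 2 = (1 + |(k:ℝ)|) * ‖η k‖ ^ 2 := by
      intro k
      simp only [ha_def]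
      rw [mul_pow, Real.sq_sqrt (by positivity)]
    have hb2 : ∀ k, b k ^ 2 = Real.exp (-|(k:ℝ)| * t) ^ 2 / (1 + |(k:ℝ)|) := by
      intro k
      simp only [hb_def]
      rw [div_pow, Real.sq_sqrt (by positivity)]
    have hsa2 : Summable (fun k => a k ^ 2) := hsum.congr (fun k => (ha2 k).symm)
    have hsb2 : Summable (fun k => b k ^ 2) := by
      refine Summable.of_nonneg_of_le (fun k => sq_nonneg _) (fun k => ?_)
        (summable_exp_abs (by linarith : (0:ℝ) < 2*t))
      rw [hb2 k]
      have h1 : Real.exp (-|(k:ℝ)| * t) ^ 2 = Real.exp (-|(k:ℝ)| * (2*t)) := by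
        rw [sq, ← Real.exp_add]; ring_nf
      rw [h1]
      exact div_le_self (Real.exp_pos _).le (le_add_of_nonneg_right (abs_nonneg _))
    have hsab : Summable (fun k => a k * b k) := hc.congr (fun k => (hab k).symm)
    have hCS := tsum_cauchy_schwarz (fun k => by positivity) (fun k => by positivity)
      hsab hsa2 hsb2
    have hSsq : S ^ 2 ≤ A * ∑' k, b k ^ 2 := by
      have h1 : (∑' k, a k * b k) = S := by rw [hS_def]; exact tsum_congr hab
      have h2 : (∑' k, a k ^ 2) = A := by rw [hA_def]; exact tsum_congr ha2
      rw [h1, h2] at hCS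
      exact hCS
    have hBs : (∑' k : ℤ, b k ^ 2) ≤ (1 + t ^ (-(1/2) : ℝ)) * W := by
      have hpt : ∀ k : ℤ, b k ^ 2
          ≤ (1 + t ^ (-(1/2) : ℝ)) * ((1 + |(k:ℝ)|) ^ (-(3/2) : ℝ)) := by
        intro k
        rcases eq_or_ne k 0 with hk | hk
        · subst hk
          have hb0 : b (0:ℤ) ^ 2 = 1 := by
            rw [hb2 0]
            norm_num
          have h1 : ((1:ℝ) + |((0:ℤ):ℝ)|) ^ (-(3/2) : ℝ) = 1 := by
            norm_num
          rw [hb0, h1, mul_one]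
          have h2 : 0 ≤ t ^ (-(1/2):ℝ) := Real.rpow_nonneg ht.le _
          linarith
        · have hk1 : (1:ℝ) ≤ |(k:ℝ)| := by
            have h := Int.one_le_abs hk
            calc (1:ℝ) ≤ ((|k| : ℤ) : ℝ) := by exact_mod_cast h
              _ = |(k:ℝ)| := by push_cast; ring
          have hu : 0 < 2 * |(k:ℝ)| * t := by nlinarith
          have h1 : Real.exp (-|(k:ℝ)| * t) ^ 2 = Real.exp (-(2 * |(k:ℝ)| * t)) := by
            rw [sq, ← Real.exp_add]; ring_nf
          have h2 : Real.exp (-(2 * |(k:ℝ)| * t)) ≤ (2 * |(k:ℝ)| * t) ^ (-(1/2) : ℝ) :=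
            exp_neg_le_rpow hu
          have h3 : (2 * |(k:ℝ)| * t) ^ (-(1/2) : ℝ)
              = (2 * |(k:ℝ)|) ^ (-(1/2) : ℝ) * t ^ (-(1/2) : ℝ) :=
            Real.mul_rpow (by positivity) ht.le
          have h4 : (2 * |(k:ℝ)|) ^ (-(1/2) : ℝ) ≤ (1 + |(k:ℝ)|) ^ (-(1/2) : ℝ) :=
            Real.rpow_le_rpow_of_nonpos (by linarith) (by linarith) (by norm_num)
          have hnum : Real.exp (-(2 * |(k:ℝ)| * t))
              ≤ t ^ (-(1/2):ℝ) * (1 + |(k:ℝ)|) ^ (-(1/2):ℝ) := by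
            calc Real.exp (-(2 * |(k:ℝ)| * t))
                ≤ (2 * |(k:ℝ)|) ^ (-(1/2):ℝ) * t ^ (-(1/2):ℝ) := by rw [← h3]; exact h2
              _ ≤ (1 + |(k:ℝ)|) ^ (-(1/2):ℝ) * t ^ (-(1/2):ℝ) :=
                  mul_le_mul_of_nonneg_right h4 (Real.rpow_nonneg ht.le _)
              _ = t ^ (-(1/2):ℝ) * (1 + |(k:ℝ)|) ^ (-(1/2):ℝ) := mul_comm _ _
          have hcinv : (0:ℝ) ≤ ((1:ℝ) + |(k:ℝ)|)⁻¹ := by positivity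
          have h7 : b k ^ 2 ≤ t ^ (-(1/2):ℝ) * (1 + |(k:ℝ)|) ^ (-(3/2):ℝ) := by
            rw [hb2 k, h1]
            calc Real.exp (-(2 * |(k:ℝ)| * t)) / (1 + |(k:ℝ)|)
                = Real.exp (-(2 * |(k:ℝ)| * t)) * ((1:ℝ) + |(k:ℝ)|)⁻¹ := div_eq_mul_inv _ _
              _ ≤ (t ^ (-(1/2):ℝ) * (1 + |(k:ℝ)|) ^ (-(1/2):ℝ)) * ((1:ℝ) + |(k:ℝ)|)⁻¹ :=
                  mul_le_mul_of_nonneg_right hnum hcinv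
              _ = t ^ (-(1/2):ℝ) * (1 + |(k:ℝ)|) ^ (-(3/2):ℝ) := by
                  rw [mul_assoc]
                  congr 1
                  rw [← Real.rpow_neg_one ((1:ℝ) + |(k:ℝ)|),
                    ← Real.rpow_add (by positivity)]
                  norm_num
          calc b k ^ 2 ≤ t ^ (-(1/2):ℝ) * (1 + |(k:ℝ)|) ^ (-(3/2):ℝ) := h7
            _ ≤ (1 + t ^ (-(1/2):ℝ)) * (1 + |(k:ℝ)|) ^ (-(3/2):ℝ) := by
                apply mul_le_mul_of_nonneg_right _ (Real.rpow_nonneg (by positivity) _)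
                linarith
      calc (∑' k : ℤ, b k ^ 2)
          ≤ ∑' k : ℤ, (1 + t ^ (-(1/2):ℝ)) * ((1 + |(k:ℝ)|) ^ (-(3/2):ℝ)) :=
            Summable.tsum_le_tsum hpt hsb2 (summable_w.mul_left _)
        _ = (1 + t ^ (-(1/2):ℝ)) * W := by rw [hW_def, tsum_mul_left]
    calc ((PhiC η y₁ t).re - (η 0).re) ^ 2
        = |(PhiC η y₁ t).re - (η 0).re| ^ 2 := (sq_abs _).symm
      _ ≤ (2*S)^2 := by
          apply pow_le_pow_left₀ (abs_nonneg _) habsf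
      _ = 4 * S^2 := by ring
      _ ≤ 4 * (A * ((1 + t ^ (-(1/2):ℝ)) * W)) := by
          nlinarith [hSsq, mul_le_mul_of_nonneg_left hBs hA0]
  -- measurability / integrability on Omega0
  have hOm : MeasurableSet (Omega0 L) := measurableSet_Ioo.prod measurableSet_Ioo
  have hsubU : Omega0 L ⊆ {p : ℝ × ℝ | 0 < p.2} := fun p hp => hp.2.1
  have hgcont : ContinuousOn (fun p : ℝ × ℝ => (blSeries η (p.1/ε) (p.2/ε) - (η 0).re) ^ 2)
      {p : ℝ × ℝ | 0 < p.2} := by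
    have hmap : Continuous fun p : ℝ × ℝ => ((p.1/ε, p.2/ε) : ℝ × ℝ) :=
      (continuous_fst.div_const ε).prodMk (continuous_snd.div_const ε)
    have hm : MapsTo (fun p : ℝ × ℝ => ((p.1/ε, p.2/ε) : ℝ × ℝ))
        {p : ℝ × ℝ | 0 < p.2} {p : ℝ × ℝ | 0 < p.2} := fun p hp => div_pos hp hε
    have h1 : ContinuousOn (fun p : ℝ × ℝ => PhiC η (p.1/ε) (p.2/ε))
        {p : ℝ × ℝ | 0 < p.2} := by
      have h2 := hPhi.comp hmap.continuousOn hm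
      exact h2
    show ContinuousOn (fun p : ℝ × ℝ => ((PhiC η (p.1/ε) (p.2/ε)).re - (η 0).re) ^ 2) _
    exact ((Complex.continuous_re.comp_continuousOn h1).sub continuousOn_const).pow 2
  have hgmeas : AEStronglyMeasurable
      (fun p : ℝ × ℝ => (blSeries η (p.1/ε) (p.2/ε) - (η 0).re) ^ 2)
      (volume.restrict (Omega0 L)) :=
    ((hgcont.mono hsubU).aemeasurable hOm).aestronglyMeasurable
  have hgbound : ∀ p ∈ Omega0 L, (blSeries η (p.1/ε) (p.2/ε) - (η 0).re) ^ 2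
      ≤ 4*(A*W) + 4*(A*W) * p.2 ^ (-(1/2) : ℝ) := by
    intro p hp
    have hpy : 0 < p.2 := hp.2.1
    have ht : 0 < p.2 / ε := div_pos hpy hε
    have h1 := hSbound (p.2/ε) ht (p.1/ε)
    have h3 : (p.2/ε) ^ (-(1/2):ℝ) ≤ p.2 ^ (-(1/2):ℝ) := by
      rw [Real.div_rpow hpy.le hε.le]
      have h4 : (1:ℝ) ≤ ε ^ (-(1/2):ℝ) := by
        have h5 := Real.rpow_le_rpow_of_exponent_ge hε hε1
          (by norm_num : (-(1/2):ℝ) ≤ 0)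
        rwa [Real.rpow_zero] at h5
      exact div_le_self (Real.rpow_nonneg hpy.le _) h4
    show ((PhiC η (p.1/ε) (p.2/ε)).re - (η 0).re) ^ 2 ≤ _
    refine le_trans h1 ?_
    nlinarith [mul_le_mul_of_nonneg_left h3 (mul_nonneg hA0 hW0)]
  have hrpowInt : IntegrableOn (fun z : ℝ => z ^ (-(1/2):ℝ)) (Ioo (0:ℝ) 1) := by
    have h1 : IntervalIntegrable (fun z : ℝ => z ^ (-(1/2):ℝ)) volume 0 1 :=
      intervalIntegral.intervalIntegrable_rpow' (by norm_num)
    exact ((intervalIntegrable_iff_integrableOn_Ioc_of_le (by norm_num : (0:ℝ) ≤ 1)).mp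
      h1).mono_set Ioo_subset_Ioc_self
  have hre : volume.restrict (Omega0 L)
      = (volume.restrict (Ioo (0:ℝ) L)).prod (volume.restrict (Ioo (0:ℝ) 1)) := by
    rw [Omega0, Measure.prod_restrict, ← Measure.volume_eq_prod]
  have hDint : IntegrableOn
      (fun p : ℝ × ℝ => 4*(A*W) + 4*(A*W) * p.2 ^ (-(1/2):ℝ)) (Omega0 L) := by
    rw [IntegrableOn, hre]
    have hmeas2 : AEStronglyMeasurable
        (fun p : ℝ × ℝ => 4*(A*W) + 4*(A*W) * p.2 ^ (-(1/2):ℝ))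
        ((volume.restrict (Ioo (0:ℝ) L)).prod (volume.restrict (Ioo (0:ℝ) 1))) := by
      apply Measurable.aestronglyMeasurable
      exact measurable_const.add (measurable_const.mul (measurable_snd.pow_const _))
    rw [integrable_prod_iff hmeas2]
    constructor
    · apply ae_of_all
      intro x
      exact (integrableOn_const measure_Ioo_lt_top.ne).add (hrpowInt.const_mul _)
    · show Integrable (fun _ : ℝ => ∫ ytwo in Ioo (0:ℝ) 1,
          ‖4*(A*W) + 4*(A*W) * ytwo ^ (-(1/2):ℝ)‖) (volume.restrict (Ioo 0 L))
      exact integrableOn_const measure_Ioo_lt_top.ne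
  have hgint2 : IntegrableOn
      (fun p : ℝ × ℝ => (blSeries η (p.1/ε) (p.2/ε) - (η 0).re) ^ 2) (Omega0 L) := by
    apply Integrable.mono' hDint hgmeas
    rw [ae_restrict_iff' hOm]
    apply ae_of_all
    intro p hp
    rw [Real.norm_eq_abs, abs_of_nonneg (sq_nonneg _)]
    exact hgbound p hp
  have hgprod : Integrable
      (fun p : ℝ × ℝ => (blSeries η (p.1/ε) (p.2/ε) - (η 0).re) ^ 2)
      ((volume.restrict (Ioo (0:ℝ) L)).prod (volume.restrict (Ioo (0:ℝ) 1))) := by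
    rw [← hre]; exact hgint2
  have hfub : (∫ p in Omega0 L, (blSeries η (p.1/ε) (p.2/ε) - (η 0).re) ^ 2)
      = ∫ ytwo in Ioo (0:ℝ) 1, ∫ x in Ioo (0:ℝ) L,
          (blSeries η (x/ε) (ytwo/ε) - (η 0).re) ^ 2 := by
    rw [show (∫ p in Omega0 L, (blSeries η (p.1/ε) (p.2/ε) - (η 0).re) ^ 2)
        = ∫ p, (blSeries η (p.1/ε) (p.2/ε) - (η 0).re) ^ 2
            ∂((volume.restrict (Ioo (0:ℝ) L)).prod (volume.restrict (Ioo (0:ℝ) 1)))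
      from by rw [← hre]]
    rw [MeasureTheory.integral_prod _ hgprod]
    have hu : Integrable (Function.uncurry fun x ytwo =>
        (blSeries η (x/ε) (ytwo/ε) - (η 0).re) ^ 2)
        ((volume.restrict (Ioo (0:ℝ) L)).prod (volume.restrict (Ioo (0:ℝ) 1))) := by
      apply hgprod.congr
      apply ae_of_all
      intro p
      simp [Function.uncurry]
    rw [MeasureTheory.integral_integral_swap hu]
  set J : ℝ → ℝ := fun ytwo => ∫ x in Ioo (0:ℝ) L,
      (blSeries η (x/ε) (ytwo/ε) - (η 0).re) ^ 2 with hJ_def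
  have hJint : IntegrableOn J (Ioo (0:ℝ) 1) := by
    have h1 := hgprod.integral_prod_right
    exact h1
  have hJnn : ∀ ytwo, 0 ≤ J ytwo := fun ytwo => integral_nonneg fun x => sq_nonneg _
  have hsl : ∀ ytwo : ℝ, 0 < ytwo →
      L * (‖η k₀‖ ^ 2 * Real.exp (-(2 * |(k₀:ℝ)|) * (ytwo/ε))) ≤ J ytwo := by
    intro ytwo hy
    exact slice_lower_bound L hL η hB hreal hη0 hPhi k₀ hk₀ hη hε hN hLN hy
  have hlow : ∀ ytwo ∈ Ioo (0:ℝ) ε,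
      L * (‖η k₀‖^2 * Real.exp (-(2*|(k₀:ℝ)|))) ≤ J ytwo := by
    intro ytwo hy
    refine le_trans ?_ (hsl ytwo hy.1)
    apply mul_le_mul_of_nonneg_left _ hL.le
    apply mul_le_mul_of_nonneg_left _ (sq_nonneg _)
    apply Real.exp_le_exp.mpr
    have h1 : ytwo / ε ≤ 1 := (div_le_one hε).mpr hy.2.le
    nlinarith [abs_nonneg ((k₀:ℝ)), div_nonneg hy.1.le hε.le]
  have hm0 : 0 < L * (‖η k₀‖^2 * Real.exp (-(2*|(k₀:ℝ)|))) := by positivity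
  have hchain : ε * (L * (‖η k₀‖^2 * Real.exp (-(2*|(k₀:ℝ)|))))
      ≤ ∫ p in Omega0 L, (blSeries η (p.1/ε) (p.2/ε) - (η 0).re) ^ 2 := by
    rw [hfub]
    calc ε * (L * (‖η k₀‖^2 * Real.exp (-(2*|(k₀:ℝ)|))))
        = ∫ _ in Ioo (0:ℝ) ε, L * (‖η k₀‖^2 * Real.exp (-(2*|(k₀:ℝ)|))) := by
          rw [setIntegral_const, Real.volume_real_Ioo_of_le hε.le, sub_zero,
            smul_eq_mul]
      _ ≤ ∫ ytwo in Ioo (0:ℝ) ε, J ytwo :=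
          setIntegral_mono_on (integrableOn_const measure_Ioo_lt_top.ne)
            (hJint.mono_set (Ioo_subset_Ioo le_rfl hε1)) measurableSet_Ioo hlow
      _ ≤ ∫ ytwo in Ioo (0:ℝ) 1, J ytwo :=
          setIntegral_mono_set hJint (ae_of_all _ hJnn)
            (HasSubset.Subset.eventuallyLE (Ioo_subset_Ioo le_rfl hε1))
  have hsqrt := Real.sqrt_le_sqrt hchain
  rw [Real.sqrt_mul hε.le] at hsqrt
  calc Real.sqrt (L * (‖η k₀‖ ^ 2 * Real.exp (-(2 * |(k₀:ℝ)|)))) * Real.sqrt ε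
      = Real.sqrt ε * Real.sqrt (L * (‖η k₀‖ ^ 2 * Real.exp (-(2 * |(k₀:ℝ)|)))) :=
        mul_comm _ _
    _ ≤ _ := hsqrt

end
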